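/- Let n ≥ 1 and let X : ℝ^{n+1} → ℝ^{n+1} be a polynomial map with ⟨X(x), x⟩ = 0 for every x with ‖x‖ = 1 (so X is tangent to the unit sphere 𝕊ⁿ). Then there exist d ∈ ℕ, coefficients B : Fin d × Fin d × Fin d → ℝ with B_{ijk} = −B_{kji}, and a polynomial map Ψ : ℝ^{n+1} → ℝ^d such that: (a) Ψ restricted to 𝕊ⁿ is injective; (b) for every x ∈ 𝕊ⁿ the derivative dΨ_x is injective on the tangent space {v : ⟨v, x⟩ = 0}; and (c) whenever γ : ℝ → ℝ^{n+1} is differentiable with ‖γ(t)‖ = 1 and γ'(t) = X(γ(t)) for all t, the curve y(t) = Ψ(γ(t)) satisfies y_i'(t) = Σ_{j,k} B_{ijk} y_j(t) y_k(t) for all t and all i. -/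

import Mathlib

open Finset

namespace SphereEmbed

variable {n K : ℕ}

/-- Index type for monomials: exponent tuples with entries ≤ K. -/
abbrev T (n K : ℕ) := Fin (n + 1) → Fin (K + 1)

def deg (μ : T n K) : ℕ := ∑ r, (μ r : ℕ)

def fct (μ : T n K) : ℕ := ∏ r, Nat.factorial (μ r)

noncomputable def cw (μ : T n K) : ℝ := (Real.sqrt (fct μ))⁻¹

def mono (x : Fin (n + 1) → ℝ) (μ : T n K) : ℝ := ∏ r, x r ^ (μ r : ℕ)

/-- The shift condition: `β = μ - e_i + e_l`, expressed additively. -/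
def Cnd (μ β : T n K) (i l : Fin (n + 1)) : Prop :=
  ∀ r, (β r : ℕ) + (if r = i then 1 else 0) = (μ r : ℕ) + (if r = l then 1 else 0)

instance (μ β : T n K) (i l : Fin (n + 1)) : Decidable (Cnd μ β i l) :=
  Fintype.decidableForallFintype

noncomputable def Ψw (x : Fin (n + 1) → ℝ) (μ : T n K) : ℝ :=
  if deg μ ≤ K then cw μ * mono x μ else 0

noncomputable def Ap (P : Fin (n + 1) → MvPolynomial (Fin (n + 1)) ℝ) (i l : Fin (n + 1)) :
    MvPolynomial (Fin (n + 1)) ℝ :=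
  P i * MvPolynomial.X l - P l * MvPolynomial.X i

noncomputable def toF (ν : T n K) : Fin (n + 1) →₀ ℕ :=
  Finsupp.equivFunOnFinite.symm (fun r => (ν r : ℕ))

noncomputable def ac (P : Fin (n + 1) → MvPolynomial (Fin (n + 1)) ℝ) (ν : T n K)
    (i l : Fin (n + 1)) : ℝ :=
  MvPolynomial.coeff (toF ν) (Ap P i l)

noncomputable def Mw (P : Fin (n + 1) → MvPolynomial (Fin (n + 1)) ℝ) (ν μ β : T n K) : ℝ :=
  ∑ i, ∑ l, ac P ν i l * (μ i : ℕ) * (cw μ / cw β) * (if Cnd μ β i l then 1 else 0)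

noncomputable def Bw (P : Fin (n + 1) → MvPolynomial (Fin (n + 1)) ℝ) (μ ν β : T n K) : ℝ :=
  if deg μ ≤ K ∧ deg ν ≤ K ∧ deg β ≤ K then Mw P ν μ β / cw ν else 0

lemma cw_pos (μ : T n K) : 0 < cw μ := by
  have h : 0 < fct μ := Finset.prod_pos fun r _ => Nat.factorial_pos _
  have : (0:ℝ) < fct μ := by exact_mod_cast h
  simp [cw, Real.sqrt_pos.2 this]

lemma cw_ne (μ : T n K) : cw μ ≠ 0 := (cw_pos μ).ne'

lemma cw_sq (μ : T n K) : cw μ * cw μ = ((fct μ : ℝ))⁻¹ := by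
  have h : (0:ℝ) ≤ (fct μ : ℝ) := Nat.cast_nonneg _
  rw [cw, ← mul_inv, Real.mul_self_sqrt h]

lemma cnd_symm {μ β : T n K} {i l : Fin (n + 1)} :
    Cnd μ β i l ↔ Cnd β μ l i := by
  constructor <;> intro h r <;> exact (h r).symm

lemma cnd_deg {μ β : T n K} {i l : Fin (n + 1)} (h : Cnd μ β i l) : deg β = deg μ := by
  have h1 : ∑ r, ((β r : ℕ) + (if r = i then 1 else 0))
      = ∑ r, ((μ r : ℕ) + (if r = l then 1 else 0)) :=
    Finset.sum_congr rfl fun r _ => h r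
  rw [Finset.sum_add_distrib, Finset.sum_add_distrib] at h1
  simp only [Finset.sum_ite_eq', Finset.mem_univ, if_true] at h1
  rw [deg, deg]
  omega

lemma cnd_weight {μ β : T n K} {i l : Fin (n + 1)} (h : Cnd μ β i l) :
    ((μ i : ℕ) : ℝ) * (cw μ / cw β) = ((β l : ℕ) : ℝ) * (cw β / cw μ) := by
  by_cases hil : i = l
  · subst hil
    have hμβ : μ = β := by
      funext r
      have := h r
      exact (Fin.ext (by omega)).symm
    subst hμβ
    rfl
  · have hi : (μ i : ℕ) = (β i : ℕ) + 1 := by have := h i; simp [hil] at this; omega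
    have hl : (β l : ℕ) = (μ l : ℕ) + 1 := by
      have := h l; simp [Ne.symm hil] at this; omega
    have ho : ∀ r, r ≠ i → r ≠ l → (β r : ℕ) = (μ r : ℕ) := by
      intro r h1 h2; have := h r; simp [h1, h2] at this; omega
    have hnat : (μ i : ℕ) * fct β = (β l : ℕ) * fct μ := by
      have hli : l ∈ univ.erase i := Finset.mem_erase.2 ⟨fun hh => hil hh.symm, mem_univ _⟩
      have hQ : ∏ r ∈ (univ.erase i).erase l, Nat.factorial (β r)
          = ∏ r ∈ (univ.erase i).erase l, Nat.factorial (μ r) := by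
        refine Finset.prod_congr rfl fun r hr => ?_
        have h1 := Finset.mem_erase.1 hr
        have h2 := Finset.mem_erase.1 h1.2
        rw [ho r h2.1 h1.1]
      have e1 : fct β = Nat.factorial (β i) * (Nat.factorial (β l) *
          ∏ r ∈ (univ.erase i).erase l, Nat.factorial (β r)) := by
        rw [fct, ← Finset.mul_prod_erase univ _ (mem_univ i),
          ← Finset.mul_prod_erase (univ.erase i) _ hli]
      have e2 : fct μ = Nat.factorial (μ i) * (Nat.factorial (μ l) *
          ∏ r ∈ (univ.erase i).erase l, Nat.factorial (μ r)) := by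
        rw [fct, ← Finset.mul_prod_erase univ _ (mem_univ i),
          ← Finset.mul_prod_erase (univ.erase i) _ hli]
      rw [e1, e2, hQ, hi, hl, Nat.factorial_succ, Nat.factorial_succ]
      ring
    have hcast : ((μ i : ℕ) : ℝ) * (fct β : ℝ) = ((β l : ℕ) : ℝ) * (fct μ : ℝ) := by
      exact_mod_cast hnat
    have hfμ : (fct μ : ℝ) ≠ 0 := by
      have : 0 < fct μ := Finset.prod_pos fun r _ => Nat.factorial_pos _
      exact_mod_cast this.ne'
    have hfβ : (fct β : ℝ) ≠ 0 := by
      have : 0 < fct β := Finset.prod_pos fun r _ => Nat.factorial_pos _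
      exact_mod_cast this.ne'
    have h2 : ((μ i : ℕ) : ℝ) * (cw μ * cw μ) = ((β l : ℕ) : ℝ) * (cw β * cw β) := by
      rw [cw_sq, cw_sq]
      field_simp
      linear_combination hcast
    rw [div_eq_mul_inv, div_eq_mul_inv]
    have hβne := cw_ne (μ := β)
    have hμne := cw_ne (μ := μ)
    field_simp
    ring_nf
    ring_nf at h2
    nlinarith [h2, cw_pos (μ := μ), cw_pos (μ := β)]

lemma ac_swap (P : Fin (n + 1) → MvPolynomial (Fin (n + 1)) ℝ) (ν : T n K)
    (i l : Fin (n + 1)) : ac P ν l i = - ac P ν i l := by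
  have h : Ap P l i = - Ap P i l := by rw [Ap, Ap]; ring
  rw [ac, ac, h, MvPolynomial.coeff_neg]

lemma ac_diag (P : Fin (n + 1) → MvPolynomial (Fin (n + 1)) ℝ) (ν : T n K)
    (i : Fin (n + 1)) : ac P ν i i = 0 := by
  have h : Ap P i i = 0 := by rw [Ap]; ring
  rw [ac, h, MvPolynomial.coeff_zero]

lemma Mw_antisymm (P : Fin (n + 1) → MvPolynomial (Fin (n + 1)) ℝ) (ν μ β : T n K) :
    Mw P ν μ β = - Mw P ν β μ := by
  have h1 : Mw P ν β μ = ∑ i, ∑ l,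
      ac P ν l i * (β l : ℕ) * (cw β / cw μ) * (if Cnd β μ l i then 1 else 0) := by
    rw [Mw]; exact Finset.sum_comm
  rw [Mw, h1, ← Finset.sum_neg_distrib]
  refine Finset.sum_congr rfl fun i _ => ?_
  rw [← Finset.sum_neg_distrib]
  refine Finset.sum_congr rfl fun l _ => ?_
  rw [ac_swap]
  by_cases hC : Cnd μ β i l
  · rw [if_pos hC, if_pos (cnd_symm.1 hC)]
    linear_combination (-(ac P ν l i)) * cnd_weight hC
  · rw [if_neg hC, if_neg (fun hh => hC (cnd_symm.2 hh))]
    ring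

lemma toF_sum (ν : T n K) : (∑ r ∈ (toF ν).support, toF ν r) = deg ν := by
  rw [deg]
  refine Finset.sum_subset (Finset.subset_univ _) fun r _ hr => ?_
  simpa using Finsupp.notMem_support_iff.1 hr

lemma ac_vanish (P : Fin (n + 1) → MvPolynomial (Fin (n + 1)) ℝ) {ν : T n K}
    {i l : Fin (n + 1)} (hA : (Ap P i l).totalDegree ≤ K) (hν : ¬ deg ν ≤ K) :
    ac P ν i l = 0 := by
  apply MvPolynomial.coeff_eq_zero_of_totalDegree_lt
  rw [toF_sum]
  omega

lemma toF_inj : Function.Injective (toF (n := n) (K := K)) := by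
  intro ν ν' h
  funext r
  have : (ν r : ℕ) = (ν' r : ℕ) := by
    have := congrArg (fun f => f r) h
    simpa [toF] using this
  exact Fin.ext this

lemma eval_expand (x : Fin (n + 1) → ℝ) (Q : MvPolynomial (Fin (n + 1)) ℝ)
    (hQ : Q.totalDegree ≤ K) :
    MvPolynomial.eval x Q = ∑ ν : T n K, MvPolynomial.coeff (toF ν) Q * mono x ν := by
  rw [MvPolynomial.eval_eq']
  have himg : Q.support ⊆ (univ : Finset (T n K)).image toF := by
    intro d hd
    have hdeg : ∀ r, d r ≤ K := by
      intro r
      by_cases h0 : d r = 0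
      · omega
      · have hr : r ∈ d.support := Finsupp.mem_support_iff.2 h0
        have h1 : d r ≤ ∑ s ∈ d.support, d s :=
          Finset.single_le_sum (fun s _ => Nat.zero_le _) hr
        have h2 : (d.sum fun _ e => e) ≤ Q.totalDegree := MvPolynomial.le_totalDegree hd
        have h3 : (d.sum fun _ e => e) = ∑ s ∈ d.support, d s := rfl
        omega
    refine Finset.mem_image.2 ⟨fun r => ⟨d r, Nat.lt_succ_of_le (hdeg r)⟩, mem_univ _, ?_⟩
    ext r
    simp [toF]
  have h2 : (∑ ν : T n K, MvPolynomial.coeff (toF ν) Q * mono x ν)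
      = ∑ d ∈ (univ : Finset (T n K)).image toF,
          MvPolynomial.coeff d Q * ∏ i, x i ^ d i := by
    rw [Finset.sum_image (fun ν _ ν' _ h => toF_inj h)]
    exact Finset.sum_congr rfl fun ν _ => by rw [mono]; rfl
  rw [h2]
  refine Finset.sum_subset himg fun d _ hd => ?_
  rw [MvPolynomial.notMem_support_iff.1 hd]
  ring

lemma Ap_deg (P : Fin (n + 1) → MvPolynomial (Fin (n + 1)) ℝ)
    (hP : ∀ i, (P i).totalDegree + 1 ≤ K) (i l : Fin (n + 1)) :
    (Ap P i l).totalDegree ≤ K := by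
  refine le_trans (MvPolynomial.totalDegree_sub _ _) (max_le ?_ ?_) <;>
  · refine le_trans (MvPolynomial.totalDegree_mul _ _) ?_
    rw [MvPolynomial.totalDegree_X]
    have := hP i; have := hP l
    omega

lemma sphere_decomp (X : (Fin (n + 1) → ℝ) → Fin (n + 1) → ℝ)
    (P : Fin (n + 1) → MvPolynomial (Fin (n + 1)) ℝ)
    (hP : ∀ i x, X x i = MvPolynomial.eval x (P i))
    (hXtan : ∀ x : Fin (n + 1) → ℝ, (∑ i, x i ^ 2) = 1 → (∑ i, X x i * x i) = 0)
    (x : Fin (n + 1) → ℝ) (hx : (∑ i, x i ^ 2) = 1) (i : Fin (n + 1)) :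
    X x i = ∑ l, MvPolynomial.eval x (Ap P i l) * x l := by
  have hev : ∀ i l, MvPolynomial.eval x (Ap P i l) = X x i * x l - X x l * x i := by
    intro i l
    simp [Ap, hP]
  have h1 : (∑ l, MvPolynomial.eval x (Ap P i l) * x l)
      = X x i * (∑ l, x l ^ 2) - (∑ l, X x l * x l) * x i := by
    rw [Finset.mul_sum, Finset.sum_mul, ← Finset.sum_sub_distrib]
    refine Finset.sum_congr rfl fun l _ => ?_
    rw [hev]
    ring
  rw [h1, hx, hXtan x hx]
  ring

/-- The key combinatorial step: the shifted monomial sum. -/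
lemma shift_prod (x : Fin (n + 1) → ℝ) (μ : T n K) (hμ : deg μ ≤ K) {i l : Fin (n + 1)}
    (hil : i ≠ l) (hi : 1 ≤ (μ i : ℕ)) :
    (∑ β : T n K, if deg β ≤ K ∧ Cnd μ β i l then mono x β else 0)
    = x i ^ ((μ i : ℕ) - 1) * (∏ r ∈ univ.erase i, x r ^ (μ r : ℕ)) * x l := by
  have hpair : (μ i : ℕ) + (μ l : ℕ) ≤ deg μ := by
    rw [deg, show (μ i : ℕ) + (μ l : ℕ) = ∑ r ∈ ({i, l} : Finset (Fin (n+1))), (μ r : ℕ) from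
      (Finset.sum_pair (f := fun r => (μ r : ℕ)) hil).symm]
    exact Finset.sum_le_sum_of_subset (Finset.subset_univ _)
  have hKi : (μ i : ℕ) - 1 < K + 1 := by have := Fin.is_le (μ i); omega
  have hKl : (μ l : ℕ) + 1 < K + 1 := by omega
  set β₀ : T n K := fun r => if hr : r = i then ⟨(μ i : ℕ) - 1, hKi⟩
    else if hr' : r = l then ⟨(μ l : ℕ) + 1, hKl⟩ else μ r with hβ₀
  have hβi : (β₀ i : ℕ) = (μ i : ℕ) - 1 := by simp [hβ₀]
  have hβl : (β₀ l : ℕ) = (μ l : ℕ) + 1 := by simp [hβ₀, Ne.symm hil]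
  have hβo : ∀ r, r ≠ i → r ≠ l → (β₀ r : ℕ) = (μ r : ℕ) := by
    intro r h1 h2; simp [hβ₀, h1, h2]
  have hC : Cnd μ β₀ i l := by
    intro r
    by_cases h1 : r = i
    · subst h1
      rw [if_pos rfl, if_neg hil, hβi]
      omega
    · by_cases h2 : r = l
      · subst h2
        rw [if_neg h1, if_pos rfl, hβl]
      · rw [if_neg h1, if_neg h2, hβo r h1 h2]
  have hact : deg β₀ ≤ K := by rw [cnd_deg hC]; exact hμ
  rw [Finset.sum_eq_single_of_mem β₀ (mem_univ _)]
  · rw [if_pos ⟨hact, hC⟩]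
    have hli : l ∈ univ.erase i := Finset.mem_erase.2 ⟨Ne.symm hil, mem_univ _⟩
    have hQ : ∏ r ∈ (univ.erase i).erase l, x r ^ (β₀ r : ℕ)
        = ∏ r ∈ (univ.erase i).erase l, x r ^ (μ r : ℕ) := by
      refine Finset.prod_congr rfl fun r hr => ?_
      have h1 := Finset.mem_erase.1 hr
      have h2 := Finset.mem_erase.1 h1.2
      rw [hβo r h2.1 h1.1]
    have e1 : mono x β₀ = x i ^ ((μ i : ℕ) - 1) * (x l ^ ((μ l : ℕ) + 1) *
        ∏ r ∈ (univ.erase i).erase l, x r ^ (β₀ r : ℕ)) := by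
      rw [mono, ← Finset.mul_prod_erase univ _ (mem_univ i),
        ← Finset.mul_prod_erase (univ.erase i) _ hli, hβi, hβl]
    have e2 : (∏ r ∈ univ.erase i, x r ^ (μ r : ℕ))
        = x l ^ (μ l : ℕ) * ∏ r ∈ (univ.erase i).erase l, x r ^ (μ r : ℕ) := by
      rw [← Finset.mul_prod_erase (univ.erase i) _ hli]
    rw [e1, hQ, e2, pow_succ]
    ring
  · intro β _ hne
    rw [if_neg]
    rintro ⟨hactβ, hCβ⟩
    apply hne
    funext r
    have h1 := hCβ r
    have h2 := hC r
    exact Fin.ext (by omega)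


lemma main_identity (X : (Fin (n + 1) → ℝ) → Fin (n + 1) → ℝ)
    (P : Fin (n + 1) → MvPolynomial (Fin (n + 1)) ℝ)
    (hP : ∀ i x, X x i = MvPolynomial.eval x (P i))
    (hXtan : ∀ x : Fin (n + 1) → ℝ, (∑ i, x i ^ 2) = 1 → (∑ i, X x i * x i) = 0)
    (hA : ∀ i l, (Ap P i l).totalDegree ≤ K)
    (x : Fin (n + 1) → ℝ) (hx : (∑ i, x i ^ 2) = 1) (μ : T n K) (hμ : deg μ ≤ K) :
    cw μ * ∑ i, (∏ r ∈ univ.erase i, x r ^ (μ r : ℕ)) *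
        (((μ i : ℕ) : ℝ) * x i ^ ((μ i : ℕ) - 1) * X x i)
    = ∑ ν : T n K, ∑ β : T n K, Bw P μ ν β * Ψw x ν * Ψw x β := by
  have heval : ∀ i l, MvPolynomial.eval x (Ap P i l) = ∑ ν : T n K, ac P ν i l * mono x ν :=
    fun i l => eval_expand x _ (hA i l)
  have hXd := sphere_decomp X P hP hXtan x hx
  have hL : cw μ * (∑ i, (∏ r ∈ univ.erase i, x r ^ (μ r : ℕ)) *
        (((μ i : ℕ) : ℝ) * x i ^ ((μ i : ℕ) - 1) * X x i))
      = ∑ i, ∑ l, ∑ ν : T n K, ac P ν i l * ((μ i : ℕ) : ℝ) * cw μ * mono x ν *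
          (x i ^ ((μ i : ℕ) - 1) * (∏ r ∈ univ.erase i, x r ^ (μ r : ℕ)) * x l) := by
    rw [Finset.mul_sum]
    refine Finset.sum_congr rfl fun i _ => ?_
    rw [hXd i]
    simp only [heval, Finset.mul_sum, Finset.sum_mul]
    refine Finset.sum_congr rfl fun l _ => Finset.sum_congr rfl fun ν _ => by ring
  have hRt : ∀ ν β : T n K, Bw P μ ν β * Ψw x ν * Ψw x β
      = ∑ i, ∑ l, ac P ν i l * ((μ i : ℕ) : ℝ) * cw μ * mono x ν *
          (if deg β ≤ K ∧ Cnd μ β i l then mono x β else 0) := by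
    intro ν β
    by_cases hβ : deg β ≤ K
    · by_cases hν : deg ν ≤ K
      · rw [Bw, if_pos ⟨hμ, hν, hβ⟩, Ψw, if_pos hν, Ψw, if_pos hβ, Mw]
        simp only [Finset.sum_mul, Finset.sum_div]
        refine Finset.sum_congr rfl fun i _ => Finset.sum_congr rfl fun l _ => ?_
        by_cases hC : Cnd μ β i l
        · rw [if_pos hC, if_pos ⟨hβ, hC⟩]
          have h1 := cw_ne (μ := ν); have h2 := cw_ne (μ := β)
          field_simp
        · rw [if_neg hC, if_neg (fun h => hC h.2)]
          ring
      · rw [Bw, if_neg (by tauto), zero_mul, zero_mul]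
        symm
        refine Finset.sum_eq_zero fun i _ => Finset.sum_eq_zero fun l _ => ?_
        rw [ac_vanish P (hA i l) hν]
        ring
    · rw [Bw, if_neg (by tauto), zero_mul, zero_mul]
      symm
      refine Finset.sum_eq_zero fun i _ => Finset.sum_eq_zero fun l _ => ?_
      rw [if_neg (fun h => hβ h.1)]
      ring
  have swap4 : ∀ (f : T n K → T n K → Fin (n + 1) → Fin (n + 1) → ℝ),
      (∑ ν : T n K, ∑ β : T n K, ∑ i, ∑ l, f ν β i l)
      = ∑ i, ∑ l, ∑ ν : T n K, ∑ β : T n K, f ν β i l := by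
    intro f
    calc (∑ ν : T n K, ∑ β : T n K, ∑ i, ∑ l, f ν β i l)
        = ∑ ν : T n K, ∑ i, ∑ β : T n K, ∑ l, f ν β i l :=
          Finset.sum_congr rfl fun ν _ => Finset.sum_comm
      _ = ∑ i, ∑ ν : T n K, ∑ β : T n K, ∑ l, f ν β i l := Finset.sum_comm
      _ = ∑ i, ∑ ν : T n K, ∑ l, ∑ β : T n K, f ν β i l :=
          Finset.sum_congr rfl fun i _ => Finset.sum_congr rfl fun ν _ => Finset.sum_comm
      _ = ∑ i, ∑ l, ∑ ν : T n K, ∑ β : T n K, f ν β i l :=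
          Finset.sum_congr rfl fun i _ => Finset.sum_comm
  have hR : (∑ ν : T n K, ∑ β : T n K, Bw P μ ν β * Ψw x ν * Ψw x β)
      = ∑ i, ∑ l, ∑ ν : T n K, ac P ν i l * ((μ i : ℕ) : ℝ) * cw μ * mono x ν *
          (∑ β : T n K, if deg β ≤ K ∧ Cnd μ β i l then mono x β else 0) := by
    rw [Finset.sum_congr rfl fun ν (_ : ν ∈ univ) =>
      Finset.sum_congr rfl fun β (_ : β ∈ univ) => hRt ν β]
    rw [swap4]
    refine Finset.sum_congr rfl fun i _ => Finset.sum_congr rfl fun l _ =>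
      Finset.sum_congr rfl fun ν _ => ?_
    rw [Finset.mul_sum]
  rw [hR, hL]
  refine Finset.sum_congr rfl fun i _ => Finset.sum_congr rfl fun l _ =>
    Finset.sum_congr rfl fun ν _ => ?_
  by_cases hil : i = l
  · subst hil
    rw [ac_diag]
    ring
  · by_cases h0 : (μ i : ℕ) = 0
    · rw [h0]
      norm_num
    · rw [shift_prod x μ hμ hil (by omega)]

lemma Bw_antisymm (P : Fin (n + 1) → MvPolynomial (Fin (n + 1)) ℝ) (μ ν β : T n K) :
    Bw P μ ν β = - Bw P β ν μ := by
  rw [Bw, Bw]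
  by_cases h : deg μ ≤ K ∧ deg ν ≤ K ∧ deg β ≤ K
  · rw [if_pos h, if_pos ⟨h.2.2, h.2.1, h.1⟩, Mw_antisymm]
    ring
  · rw [if_neg h, if_neg (by tauto)]
    ring

lemma Ψw_poly (μ : T n K) : ∃ Q : MvPolynomial (Fin (n + 1)) ℝ,
    ∀ x, Ψw x μ = MvPolynomial.eval x Q := by
  by_cases hμ : deg μ ≤ K
  · refine ⟨MvPolynomial.C (cw μ) * ∏ r, MvPolynomial.X r ^ (μ r : ℕ), fun x => ?_⟩
    rw [Ψw, if_pos hμ, mono]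
    simp
  · exact ⟨0, fun x => by rw [Ψw, if_neg hμ]; simp⟩

def unitIdx (hK : 1 ≤ K) (j : Fin (n + 1)) : T n K :=
  fun r => if r = j then ⟨1, by omega⟩ else ⟨0, by omega⟩

lemma deg_unitIdx (hK : 1 ≤ K) (j : Fin (n + 1)) : deg (unitIdx hK j) = 1 := by
  rw [deg]
  have : ∀ r, ((unitIdx hK j r : ℕ)) = if r = j then 1 else 0 := by
    intro r; rw [unitIdx]; split <;> rfl
  simp [this]

lemma Ψw_unitIdx (hK : 1 ≤ K) (x : Fin (n + 1) → ℝ) (j : Fin (n + 1)) :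
    Ψw x (unitIdx hK j) = cw (unitIdx hK j) * x j := by
  rw [Ψw, if_pos (by rw [deg_unitIdx]; omega), mono]
  congr 1
  have : ∀ r, ((unitIdx hK j r : ℕ)) = if r = j then 1 else 0 := by
    intro r; rw [unitIdx]; split <;> rfl
  simp only [this, pow_ite, pow_one, pow_zero]
  simp

lemma mono_diff (k : Fin (n + 1) → ℕ) (s : Finset (Fin (n + 1))) :
    Differentiable ℝ (fun x : Fin (n + 1) → ℝ => ∏ r ∈ s, x r ^ k r) := by
  classical
  induction s using Finset.induction with
  | empty => simpa using differentiable_const (1 : ℝ)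
  | @insert a s ha ih =>
    have h1 : Differentiable ℝ (fun x : Fin (n + 1) → ℝ => x a ^ k a) :=
      ((ContinuousLinearMap.proj a :
        (Fin (n + 1) → ℝ) →L[ℝ] ℝ).differentiable).pow _
    have h2 := h1.mul ih
    have hfe : (fun x : Fin (n + 1) → ℝ => ∏ r ∈ insert a s, x r ^ k r)
        = fun x : Fin (n + 1) → ℝ => x a ^ k a * ∏ r ∈ s, x r ^ k r := by
      funext x
      rw [Finset.prod_insert ha]
    rw [hfe]
    exact h2

lemma Ψw_diff (μ : T n K) : Differentiable ℝ (fun x : Fin (n + 1) → ℝ => Ψw x μ) := by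
  by_cases hμ : deg μ ≤ K
  · have h := ((mono_diff (fun r => (μ r : ℕ)) univ).const_mul (cw μ))
    have hfe : (fun x : Fin (n + 1) → ℝ => Ψw x μ)
        = fun x : Fin (n + 1) → ℝ => cw μ * ∏ r, x r ^ (μ r : ℕ) := by
      funext x
      rw [Ψw, if_pos hμ, mono]
    rw [hfe]
    exact h
  · have hfe : (fun x : Fin (n + 1) → ℝ => Ψw x μ) = fun _ => (0 : ℝ) := by
      funext x
      rw [Ψw, if_neg hμ]
    rw [hfe]
    exact differentiable_const (0 : ℝ)

lemma hasDerivAt_mono (X : (Fin (n + 1) → ℝ) → Fin (n + 1) → ℝ) (γ : ℝ → Fin (n + 1) → ℝ)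
    (t : ℝ) (hγ : HasDerivAt γ (X (γ t)) t) (μ : T n K) :
    HasDerivAt (fun s => ∏ r, γ s r ^ (μ r : ℕ))
      (∑ i, (∏ r ∈ univ.erase i, γ t r ^ (μ r : ℕ)) *
        (((μ i : ℕ) : ℝ) * γ t i ^ ((μ i : ℕ) - 1) * X (γ t) i)) t := by
  have hcomp : ∀ r, HasDerivAt (fun s => γ s r) (X (γ t) r) t := by
    intro r
    exact ((ContinuousLinearMap.proj r :
      (Fin (n + 1) → ℝ) →L[ℝ] ℝ).hasFDerivAt).comp_hasDerivAt t hγ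
  have hp : ∀ r, HasDerivAt (fun s => γ s r ^ (μ r : ℕ))
      (((μ r : ℕ) : ℝ) * γ t r ^ ((μ r : ℕ) - 1) * X (γ t) r) t :=
    fun r => (hcomp r).pow _
  have h := HasDerivAt.fun_finsetProd (u := univ)
    (f := fun r s => γ s r ^ (μ r : ℕ))
    (f' := fun r => ((μ r : ℕ) : ℝ) * γ t r ^ ((μ r : ℕ) - 1) * X (γ t) r)
    (fun r _ => hp r)
  simpa [smul_eq_mul] using h

end SphereEmbed

open SphereEmbed

/-- sphere case of the key proposition. Every polynomial vector
field `X` on `ℝ^{n+1}` tangent to the unit sphere `𝕊ⁿ` is smoothly conjugate, via a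
polynomial embedding `Ψ` of `𝕊ⁿ` into `ℝ^d`, to the restriction of a homogeneous
quadratic ODE on `ℝ^d` with coefficient tensor `B` satisfying `B_{ijk} = −B_{kji}`. -/
theorem sphere_polynomial_field_embeds_in_quadratic_ODE
    (n : ℕ) (hn : 1 ≤ n)
    (X : (Fin (n + 1) → ℝ) → Fin (n + 1) → ℝ)
    (hXpoly : ∀ i : Fin (n + 1), ∃ P : MvPolynomial (Fin (n + 1)) ℝ,
      ∀ x : Fin (n + 1) → ℝ, X x i = MvPolynomial.eval x P)
    (hXtan : ∀ x : Fin (n + 1) → ℝ, (∑ i, x i ^ 2) = 1 → (∑ i, X x i * x i) = 0) :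
    ∃ (d : ℕ) (B : Fin d → Fin d → Fin d → ℝ) (Ψ : (Fin (n + 1) → ℝ) → Fin d → ℝ),
      (∀ i j k, B i j k = -B k j i) ∧
      (∀ i : Fin d, ∃ P : MvPolynomial (Fin (n + 1)) ℝ,
        ∀ x : Fin (n + 1) → ℝ, Ψ x i = MvPolynomial.eval x P) ∧
      (∀ x y : Fin (n + 1) → ℝ, (∑ i, x i ^ 2) = 1 → (∑ i, y i ^ 2) = 1 →
        Ψ x = Ψ y → x = y) ∧
      (∀ x : Fin (n + 1) → ℝ, (∑ i, x i ^ 2) = 1 →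
        ∀ v : Fin (n + 1) → ℝ, (∑ i, v i * x i) = 0 →
          fderiv ℝ Ψ x v = 0 → v = 0) ∧
      (∀ γ : ℝ → Fin (n + 1) → ℝ,
        (∀ t : ℝ, (∑ i, γ t i ^ 2) = 1) →
        (∀ t : ℝ, HasDerivAt γ (X (γ t)) t) →
        ∀ (t : ℝ) (i : Fin d),
          HasDerivAt (fun s => Ψ (γ s) i)
            (∑ j, ∑ k, B i j k * Ψ (γ t) j * Ψ (γ t) k) t) := by
  classical
  choose P hP using hXpoly
  have hP' : ∀ i x, X x i = MvPolynomial.eval x (P i) := fun i x => hP i x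
  set K : ℕ := (Finset.univ.sup fun i => (P i).totalDegree) + 1 with hKdef
  have hK1 : 1 ≤ K := by omega
  have hPK : ∀ i, (P i).totalDegree + 1 ≤ K := by
    intro i
    have h : (P i).totalDegree ≤ Finset.univ.sup fun i => (P i).totalDegree := by
      simpa using Finset.le_sup (f := fun i => (P i).totalDegree) (Finset.mem_univ i)
    omega
  have hA : ∀ i l, (Ap P i l).totalDegree ≤ K := Ap_deg (K := K) P hPK
  set d : ℕ := Fintype.card (T n K) with hd
  set e : T n K ≃ Fin d := Fintype.equivFin _ with he
  refine ⟨d, fun i j k => Bw P (e.symm i) (e.symm j) (e.symm k),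
    fun x i => Ψw x (e.symm i), ?_, ?_, ?_, ?_, ?_⟩
  · intro i j k
    exact Bw_antisymm P _ _ _
  · intro i
    exact Ψw_poly (e.symm i)
  · -- injectivity on the sphere
    intro x y _ _ hxy
    funext j
    have h1 := congrFun hxy (e (unitIdx hK1 j))
    simp only [Equiv.symm_apply_apply] at h1
    rw [Ψw_unitIdx, Ψw_unitIdx] at h1
    exact mul_left_cancel₀ (cw_ne _) h1
  · -- immersion
    intro x _ v _ hfd
    funext j
    set μj := unitIdx (n := n) hK1 j with hμj
    have hdiff : ∀ i : Fin d, DifferentiableAt ℝ (fun x => Ψw x (e.symm i)) x :=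
      fun i => (Ψw_diff (e.symm i)).differentiableAt
    have hfp : fderiv ℝ (fun x (i : Fin d) => Ψw x (e.symm i)) x
        = ContinuousLinearMap.pi fun i => fderiv ℝ (fun x => Ψw x (e.symm i)) x :=
      fderiv_pi hdiff
    have h1 := congrFun hfd (e μj)
    rw [hfp] at h1
    simp only [ContinuousLinearMap.pi_apply] at h1
    have h2 : (fun x : Fin (n + 1) → ℝ => Ψw x (e.symm (e μj)))
        = fun x : Fin (n + 1) → ℝ => cw μj * x j := by
      funext z
      rw [Equiv.symm_apply_apply, Ψw_unitIdx]
    rw [h2] at h1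
    have hL : HasFDerivAt (fun x : Fin (n + 1) → ℝ => cw μj * x j)
        ((cw μj) • (ContinuousLinearMap.proj j : (Fin (n + 1) → ℝ) →L[ℝ] ℝ)) x := by
      have := ((cw μj) • (ContinuousLinearMap.proj j :
        (Fin (n + 1) → ℝ) →L[ℝ] ℝ)).hasFDerivAt (x := x)
      refine this.congr_of_eventuallyEq (Filter.Eventually.of_forall fun z => ?_)
      simp [smul_eq_mul]
    rw [hL.fderiv] at h1
    simp only [ContinuousLinearMap.smul_apply, ContinuousLinearMap.proj_apply,
      smul_eq_mul, Pi.zero_apply] at h1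
    exact (mul_eq_zero.1 h1).resolve_left (cw_ne _)
  · -- the quadratic ODE
    intro γ hsph hode t i
    set μ : T n K := e.symm i with hμdef
    have hsum : (∑ j, ∑ k, Bw P (e.symm i) (e.symm j) (e.symm k) *
          Ψw (γ t) (e.symm j) * Ψw (γ t) (e.symm k))
        = ∑ ν : T n K, ∑ β : T n K, Bw P μ ν β * Ψw (γ t) ν * Ψw (γ t) β := by
      calc (∑ j, ∑ k, Bw P μ (e.symm j) (e.symm k) *
              Ψw (γ t) (e.symm j) * Ψw (γ t) (e.symm k))
          = ∑ j, ∑ β : T n K, Bw P μ (e.symm j) β * Ψw (γ t) (e.symm j) * Ψw (γ t) β :=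
            Finset.sum_congr rfl fun j _ => Equiv.sum_comp e.symm
              (fun β => Bw P μ (e.symm j) β * Ψw (γ t) (e.symm j) * Ψw (γ t) β)
        _ = ∑ ν : T n K, ∑ β : T n K, Bw P μ ν β * Ψw (γ t) ν * Ψw (γ t) β :=
            Equiv.sum_comp e.symm
              (fun ν => ∑ β : T n K, Bw P μ ν β * Ψw (γ t) ν * Ψw (γ t) β)
    show HasDerivAt (fun s => Ψw (γ s) μ)
      (∑ j, ∑ k, Bw P (e.symm i) (e.symm j) (e.symm k) *
        Ψw (γ t) (e.symm j) * Ψw (γ t) (e.symm k)) t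
    rw [hsum]
    by_cases hμ : deg μ ≤ K
    · have h1 := hasDerivAt_mono X γ t (hode t) μ
      have h2 := h1.const_mul (cw μ)
      have h3 : (fun s => Ψw (γ s) μ) = fun s => cw μ * ∏ r, γ s r ^ (μ r : ℕ) := by
        funext s
        rw [Ψw, if_pos hμ, mono]
      have h4 := main_identity X P hP' hXtan hA (γ t) (hsph t) μ hμ
      rw [h3, ← h4]
      exact h2
    · have h3 : (fun s => Ψw (γ s) μ) = fun _ => (0 : ℝ) := by
        funext s
        rw [Ψw, if_neg hμ]
      have h4 : (∑ ν : T n K, ∑ β : T n K, Bw P μ ν β * Ψw (γ t) ν * Ψw (γ t) β) = 0 := by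
        refine Finset.sum_eq_zero fun ν _ => Finset.sum_eq_zero fun β _ => ?_
        rw [Bw, if_neg (by tauto)]
        ring
      rw [h3, h4]
      exact hasDerivAt_const t 0
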